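/- Let H be a Hilbert space, b a continuous sesquilinear form on H, (X_ℓ) a nested sequence of subspaces with closure X_∞ := closure(⋃_ℓ X_ℓ), u ∈ X_∞, and (U_ℓ) a sequence with U_ℓ ∈ X_ℓ and Galerkin orthogonality b(u − U_ℓ, V) = 0 for all V ∈ X_ℓ. Define e_ℓ := (u − U_ℓ)/‖u − U_ℓ‖ if u ≠ U_ℓ and e_ℓ := 0 otherwise. Assume b is definite on X_∞: for w ∈ X_∞, (∀ v ∈ X_∞, b(w,v) = 0) implies w = 0. Then e_ℓ ⇀ 0 weakly in H. -/

import Mathlib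

open Filter Topology

/-- The normalized Galerkin errors converge weakly to zero (Lemma 3.3). -/
theorem stmt17 {𝕜 : Type*} [RCLike 𝕜] {H : Type*} [NormedAddCommGroup H]
    [InnerProductSpace 𝕜 H] [CompleteSpace H]
    (b : H → H → 𝕜) (M : ℝ)
    (hadd : ∀ x y v, b (x + y) v = b x v + b y v)
    (hsmul : ∀ (c : 𝕜) x v, b (c • x) v = starRingEnd 𝕜 c * b x v)
    (hlin : ∀ w, IsLinearMap 𝕜 (b w))
    (hcont : ∀ w v, ‖b w v‖ ≤ M * ‖w‖ * ‖v‖)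
    (X : ℕ → Submodule 𝕜 H) (hnested : ∀ ℓ, X ℓ ≤ X (ℓ + 1))
    (u : H) (hu : u ∈ closure (⋃ ℓ, (X ℓ : Set H)))
    (U : ℕ → H) (hUmem : ∀ ℓ, U ℓ ∈ X ℓ)
    (hGalerkin : ∀ ℓ, ∀ V ∈ X ℓ, b (u - U ℓ) V = 0)
    (hdef : ∀ w ∈ closure (⋃ ℓ, (X ℓ : Set H)),
      (∀ v ∈ closure (⋃ ℓ, (X ℓ : Set H)), b w v = 0) → w = 0)
    (e : ℕ → H)
    (he0 : ∀ ℓ, u = U ℓ → e ℓ = 0)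
    (he1 : ∀ ℓ, u ≠ U ℓ → e ℓ = ((‖u - U ℓ‖⁻¹ : ℝ) : 𝕜) • (u - U ℓ)) :
    ∀ f : H →L[𝕜] 𝕜, Tendsto (fun ℓ => f (e ℓ)) atTop (𝓝 0) := by
  classical
  intro f
  haveI : ProperSpace 𝕜 := FiniteDimensional.proper_rclike 𝕜 𝕜
  -- basic setup
  have hmono : Monotone X := monotone_nat_of_le_succ hnested
  have hcoe : ((⨆ ℓ, X ℓ : Submodule 𝕜 H) : Set H) = ⋃ ℓ, (X ℓ : Set H) :=
    Submodule.coe_iSup_of_directed X hmono.directed_le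
  set Xinf : Submodule 𝕜 H := (⨆ ℓ, X ℓ).topologicalClosure with hXinf
  have hXinf_coe : (Xinf : Set H) = closure (⋃ ℓ, (X ℓ : Set H)) := by
    rw [hXinf, Submodule.topologicalClosure_coe, hcoe]
  have hu' : u ∈ Xinf := by rw [← SetLike.mem_coe, hXinf_coe]; exact hu
  have hU' : ∀ ℓ, U ℓ ∈ Xinf := fun ℓ =>
    Submodule.le_topologicalClosure _ (le_iSup X ℓ (hUmem ℓ))
  have he_mem : ∀ ℓ, e ℓ ∈ Xinf := by
    intro ℓ
    by_cases h : u = U ℓ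
    · rw [he0 ℓ h]; exact Xinf.zero_mem
    · rw [he1 ℓ h]; exact Xinf.smul_mem _ (Xinf.sub_mem hu' (hU' ℓ))
  have he_norm : ∀ ℓ, ‖e ℓ‖ ≤ 1 := by
    intro ℓ
    by_cases h : u = U ℓ
    · rw [he0 ℓ h]; simp
    · rw [he1 ℓ h, norm_smul]
      have hne : u - U ℓ ≠ 0 := sub_ne_zero.mpr h
      rw [RCLike.norm_ofReal, abs_of_nonneg (by positivity)]
      rw [inv_mul_cancel₀ (norm_ne_zero_iff.mpr hne)]
  have hb0 : ∀ v, b 0 v = 0 := by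
    intro v
    have := hsmul 0 0 v
    simpa using this
  -- eventual b-orthogonality
  have hbev : ∀ m, ∀ v ∈ X m, ∀ ℓ, m ≤ ℓ → b (e ℓ) v = 0 := by
    intro m v hv ℓ hml
    have hv' : v ∈ X ℓ := hmono hml hv
    by_cases h : u = U ℓ
    · rw [he0 ℓ h]; exact hb0 v
    · rw [he1 ℓ h, hsmul, hGalerkin ℓ v hv', mul_zero]
  -- Riesz representation of the antilinear functionals w ↦ b w v
  have hbc : ∀ v : H, ∃ z : H, ∀ w : H, (inner 𝕜 w z : 𝕜) = b w v := by
    intro v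
    let L : H →ₗ[𝕜] 𝕜 :=
      { toFun := fun w => starRingEnd 𝕜 (b w v)
        map_add' := by intro x y; rw [hadd]; simp
        map_smul' := by
          intro c x; rw [hsmul]
          simp [mul_comm] }
    have hLb : ∀ w, ‖L w‖ ≤ (M * ‖v‖) * ‖w‖ := by
      intro w
      have : ‖L w‖ = ‖b w v‖ := by simp [L]
      rw [this]
      calc ‖b w v‖ ≤ M * ‖w‖ * ‖v‖ := hcont w v
        _ = (M * ‖v‖) * ‖w‖ := by ring
    let Lc : H →L[𝕜] 𝕜 := LinearMap.mkContinuous L (M * ‖v‖) hLb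
    refine ⟨(InnerProductSpace.toDual 𝕜 H).symm Lc, fun w => ?_⟩
    have h1 : (inner 𝕜 ((InnerProductSpace.toDual 𝕜 H).symm Lc) w : 𝕜) = Lc w :=
      InnerProductSpace.toDual_symm_apply
    have h2 : Lc w = starRingEnd 𝕜 (b w v) := rfl
    calc (inner 𝕜 w ((InnerProductSpace.toDual 𝕜 H).symm Lc) : 𝕜)
        = starRingEnd 𝕜 (inner 𝕜 ((InnerProductSpace.toDual 𝕜 H).symm Lc) w : 𝕜) := by
          rw [inner_conj_symm]
      _ = starRingEnd 𝕜 (starRingEnd 𝕜 (b w v)) := by rw [h1, h2]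
      _ = b w v := by simp
  -- continuity of b w
  have hbcont : ∀ w : H, Continuous (b w) := by
    intro w
    have : Continuous ⇑(IsLinearMap.mk' (b w) (hlin w)) :=
      AddMonoidHomClass.continuous_of_bound (IsLinearMap.mk' (b w) (hlin w)) (M * ‖w‖)
        (fun v => hcont w v)
    exact this
  -- assume not tendsto; extract a "bad" subfilter
  by_contra hnot
  rw [Metric.tendsto_atTop] at hnot
  push_neg at hnot
  obtain ⟨ε, hε, hfreq⟩ := hnot
  set S : Set ℕ := {ℓ | ε ≤ dist (f (e ℓ)) 0} with hS
  have hLne : (atTop ⊓ 𝓟 S).NeBot := by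
    rw [← Filter.frequently_iff_neBot]
    rw [Filter.frequently_atTop]
    intro N
    obtain ⟨n, hn, hn'⟩ := hfreq N
    exact ⟨n, hn, hn'⟩
  set Lf : Filter ℕ := atTop ⊓ 𝓟 S with hLf
  haveI := hLne
  -- the sequence of functionals
  set φ : ℕ → WeakDual 𝕜 H := fun ℓ =>
    StrongDual.toWeakDual (innerSL 𝕜 (e ℓ)) with hφ
  set K : Set (WeakDual 𝕜 H) :=
    WeakDual.toStrongDual ⁻¹' Metric.closedBall 0 1 with hK
  have hKc : IsCompact K := WeakDual.isCompact_closedBall (𝕜 := 𝕜) (E := H) 0 1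
  have hφK : ∀ ℓ, φ ℓ ∈ K := by
    intro ℓ
    simp only [hK, Set.mem_preimage, Metric.mem_closedBall, dist_zero_right]
    show ‖innerSL 𝕜 (e ℓ)‖ ≤ 1
    rw [innerSL_apply_norm]
    exact he_norm ℓ
  have hFle : Filter.map φ Lf ≤ 𝓟 K :=
    Filter.le_principal_iff.mpr (Filter.mem_map.mpr (Filter.Eventually.of_forall hφK))
  obtain ⟨ψ, hψK, hcl⟩ := hKc.exists_clusterPt hFle
  -- key: if ⟪e ℓ, v⟫ → 0 along atTop then ψ v = 0
  have key : ∀ v : H, Tendsto (fun ℓ => (inner 𝕜 (e ℓ) v : 𝕜)) atTop (𝓝 0) → ψ v = 0 := by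
    intro v hv
    have h1 : Tendsto (fun χ : WeakDual 𝕜 H => χ v) (Filter.map φ Lf) (𝓝 0) := by
      rw [Filter.tendsto_map'_iff]
      have : (fun ℓ => (φ ℓ) v) = fun ℓ => (inner 𝕜 (e ℓ) v : 𝕜) := by
        funext ℓ; rfl
      show Tendsto (fun ℓ => (φ ℓ) v) Lf (𝓝 0)
      rw [this]
      exact hv.mono_left inf_le_left
    have h2 : ClusterPt (ψ v) (𝓝 (0 : 𝕜)) :=
      hcl.map (WeakDual.eval_continuous v).continuousAt h1
    have h3 : (𝓝 (ψ v) ⊓ 𝓝 (0 : 𝕜)).NeBot := h2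
    exact t2_iff_nhds.mp inferInstance h3
  -- Riesz representer of ψ
  set w : H := (InnerProductSpace.toDual 𝕜 H).symm (WeakDual.toStrongDual ψ) with hw
  have hwv : ∀ v, (inner 𝕜 w v : 𝕜) = ψ v := fun v =>
    InnerProductSpace.toDual_symm_apply
  -- w ∈ Xinf
  have hwmem : w ∈ Xinf := by
    have hXc : Xinf.topologicalClosure = Xinf := by
      apply SetLike.coe_injective
      rw [Submodule.topologicalClosure_coe, hXinf]
      exact ((⨆ ℓ, X ℓ).isClosed_topologicalClosure).closure_eq
    rw [← hXc, ← Submodule.orthogonal_orthogonal_eq_closure]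
    rw [Submodule.mem_orthogonal]
    intro v hv
    have hz : ψ v = 0 := by
      apply key
      have : ∀ ℓ, (inner 𝕜 (e ℓ) v : 𝕜) = 0 := fun ℓ =>
        Submodule.inner_right_of_mem_orthogonal (he_mem ℓ) hv
      simp only [this]
      exact tendsto_const_nhds
    rw [← hwv v] at hz
    rw [← inner_conj_symm, hz, map_zero]
  -- b w v = 0 on the union
  have hbw : ∀ m, ∀ v ∈ X m, b w v = 0 := by
    intro m v hv
    obtain ⟨z, hz⟩ := hbc v
    have htend : Tendsto (fun ℓ => (inner 𝕜 (e ℓ) z : 𝕜)) atTop (𝓝 0) := by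
      have heq : ∀ᶠ ℓ in atTop, (0 : 𝕜) = (inner 𝕜 (e ℓ) z : 𝕜) := by
        rw [Filter.eventually_atTop]
        exact ⟨m, fun ℓ hℓ => by rw [hz (e ℓ), hbev m v hv ℓ hℓ]⟩
      exact tendsto_const_nhds.congr' heq
    have := key z htend
    rw [← hwv z, hz w] at this
    exact this
  -- b w v = 0 on the closure, so w = 0
  have hbwc : ∀ v ∈ closure (⋃ ℓ, (X ℓ : Set H)), b w v = 0 := by
    have heq : Set.EqOn (b w) (fun _ => (0 : 𝕜)) (⋃ ℓ, (X ℓ : Set H)) := by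
      intro v hv
      obtain ⟨s, ⟨m, rfl⟩, hvs⟩ := hv
      exact hbw m v hvs
    have := heq.closure (hbcont w) continuous_const
    exact fun v hv => this hv
  have hw0 : w = 0 := by
    apply hdef w _ hbwc
    rw [← hXinf_coe]
    exact hwmem
  have hψ0 : ∀ v, ψ v = 0 := by
    intro v
    rw [← hwv v, hw0, inner_zero_left]
  -- contradiction: f's representer
  set g : H := (InnerProductSpace.toDual 𝕜 H).symm f with hg
  have hgv : ∀ x, (inner 𝕜 g x : 𝕜) = f x := fun x =>
    InnerProductSpace.toDual_symm_apply
  have hclg : ClusterPt (ψ g) (Filter.map (fun ℓ => (φ ℓ) g) Lf) := by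
    have : Filter.Tendsto (fun χ : WeakDual 𝕜 H => χ g) (Filter.map φ Lf)
        (Filter.map (fun ℓ => (φ ℓ) g) Lf) := by
      rw [Filter.tendsto_map'_iff]
      exact Filter.tendsto_map
    exact hcl.map (WeakDual.eval_continuous g).continuousAt this
  rw [hψ0 g] at hclg
  have hA : {z : 𝕜 | ‖z‖ < ε} ∈ 𝓝 (0 : 𝕜) := by
    have := Metric.ball_mem_nhds (0 : 𝕜) hε
    simpa [Metric.ball, dist_zero_right] using this
  have hB : {z : 𝕜 | ε ≤ ‖z‖} ∈ Filter.map (fun ℓ => (φ ℓ) g) Lf := by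
    rw [Filter.mem_map]
    apply Filter.mem_of_superset (Filter.mem_inf_of_right (Filter.mem_principal_self S))
    intro ℓ hℓ
    have h1 : ((φ ℓ) g : 𝕜) = (inner 𝕜 (e ℓ) g : 𝕜) := rfl
    have h2 : (inner 𝕜 (e ℓ) g : 𝕜) = starRingEnd 𝕜 (f (e ℓ)) := by
      rw [← inner_conj_symm, hgv (e ℓ)]
    have h3 : ε ≤ ‖f (e ℓ)‖ := by
      have := hℓ
      rwa [hS, Set.mem_setOf_eq, dist_zero_right] at this
    simp only [Set.mem_preimage, Set.mem_setOf_eq, h1, h2, RCLike.norm_conj]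
    exact h3
  have hne : ({z : 𝕜 | ‖z‖ < ε} ∩ {z : 𝕜 | ε ≤ ‖z‖}).Nonempty := by
    have h4 : (𝓝 (0 : 𝕜) ⊓ Filter.map (fun ℓ => (φ ℓ) g) Lf).NeBot := hclg
    exact h4.nonempty_of_mem (Filter.inter_mem (Filter.mem_inf_of_left hA)
      (Filter.mem_inf_of_right hB))
  obtain ⟨z, hz1, hz2⟩ := hne
  simp only [Set.mem_setOf_eq] at hz1 hz2
  linarith
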